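/- Suppose (f,g) ∈ H¹(ℝ)² minimizes τ(f,g) = -a∫(f')² - c∫(g')² + ∫f²g + 2∫fg subject to ‖f‖₂² + ‖g‖₂² = μ, and satisfies the Euler–Lagrange system af'' + fg + g = λf, cg'' + (1/2)f² + f = λg for some λ ∈ ℝ. Then λμ = τ(f,g) + (1/2)∫f²g, and hence -λμ ≥ -m(μ). -/

import Mathlib

open MeasureTheory Real

lemma sq_int_mul_aux {f g : ℝ → ℝ} (hf : Continuous f) (hg : Continuous g)
    (h2f : Integrable (fun x => (f x) ^ 2)) (h2g : Integrable (fun x => (g x) ^ 2)) :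
    Integrable (fun x => f x * g x) := by
  refine ((h2f.add h2g).div_const 2).mono' (hf.mul hg).aestronglyMeasurable ?_
  filter_upwards with x
  simp only [Pi.add_apply]
  rw [Real.norm_eq_abs, abs_mul]
  nlinarith [sq_nonneg (|f x| - |g x|), sq_abs (f x), sq_abs (g x)]

/-- If `(f,g)` minimizes `τ` on `X_μ` and satisfies the Euler–Lagrange system
`af'' + fg + g = λf`, `cg'' + (1/2)f² + f = λg`, then
`λμ = τ(f,g) + (1/2)∫f²g`, and hence `-λμ ≥ -m(μ)` (where `m(μ) = τ(f,g)`). -/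
theorem stmt11 (a c μ lam : ℝ) (ha : a < 0) (hc : c < 0) (hμ : 0 < μ)
    (f g f' g' f'' g'' : ℝ → ℝ)
    (hf : ∀ x, HasDerivAt f (f' x) x) (hg : ∀ x, HasDerivAt g (g' x) x)
    (hf' : ∀ x, HasDerivAt f' (f'' x) x) (hg' : ∀ x, HasDerivAt g' (g'' x) x)
    (hfpos : ∀ x, 0 ≤ f x) (hgneg : ∀ x, g x ≤ 0)
    (hif2 : Integrable (fun x => (f x) ^ 2))
    (hif'2 : Integrable (fun x => (f' x) ^ 2))
    (hig2 : Integrable (fun x => (g x) ^ 2))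
    (hig'2 : Integrable (fun x => (g' x) ^ 2))
    (hif2g : Integrable (fun x => (f x) ^ 2 * g x))
    (hifg : Integrable (fun x => f x * g x))
    (hiff'' : Integrable (fun x => f x * f'' x))
    (higg'' : Integrable (fun x => g x * g'' x))
    (hconstraint : (∫ x, (f x) ^ 2) + (∫ x, (g x) ^ 2) = μ)
    (hEL1 : ∀ x, a * f'' x + f x * g x + g x = lam * f x)
    (hEL2 : ∀ x, c * g'' x + (1 / 2) * (f x) ^ 2 + f x = lam * g x) :
    lam * μ =
      (-a * (∫ x, (f' x) ^ 2) - c * (∫ x, (g' x) ^ 2)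
        + (∫ x, (f x) ^ 2 * g x) + 2 * (∫ x, f x * g x))
        + (1 / 2) * (∫ x, (f x) ^ 2 * g x) ∧
    -(lam * μ) ≥
      -(-a * (∫ x, (f' x) ^ 2) - c * (∫ x, (g' x) ^ 2)
        + (∫ x, (f x) ^ 2 * g x) + 2 * (∫ x, f x * g x)) := by
  have cf : Continuous f := continuous_iff_continuousAt.2 fun x => (hf x).continuousAt
  have cg : Continuous g := continuous_iff_continuousAt.2 fun x => (hg x).continuousAt
  have cf' : Continuous f' := continuous_iff_continuousAt.2 fun x => (hf' x).continuousAt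
  have cg' : Continuous g' := continuous_iff_continuousAt.2 fun x => (hg' x).continuousAt
  have hiff' : Integrable (fun x => f x * f' x) := sq_int_mul_aux cf cf' hif2 hif'2
  have higg' : Integrable (fun x => g x * g' x) := sq_int_mul_aux cg cg' hig2 hig'2
  -- integration by parts: ∫ f f'' = -∫ f'²
  have sqf' : (∫ x, f' x * f' x) = ∫ x, (f' x) ^ 2 := by
    congr 1; funext x; ring
  have sqg' : (∫ x, g' x * g' x) = ∫ x, (g' x) ^ 2 := by
    congr 1; funext x; ring
  have ibpf : (∫ x, f x * f'' x) = -∫ x, (f' x) ^ 2 := by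
    have h := integral_mul_deriv_eq_deriv_mul_of_integrable (u := f) (v := f') (u' := f')
      (v' := f'') (fun x _ => hf x) (fun x _ => hf' x) hiff'' (by simpa [Pi.mul_def, sq] using hif'2) hiff'
    rw [← sqf']; exact h
  have ibpg : (∫ x, g x * g'' x) = -∫ x, (g' x) ^ 2 := by
    have h := integral_mul_deriv_eq_deriv_mul_of_integrable (u := g) (v := g') (u' := g')
      (v' := g'') (fun x _ => hg x) (fun x _ => hg' x) higg'' (by simpa [Pi.mul_def, sq] using hig'2) higg'
    rw [← sqg']; exact h
  -- integrate EL1 against f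
  have E1 : a * (∫ x, f x * f'' x) + ((∫ x, (f x) ^ 2 * g x) + ∫ x, f x * g x)
      = lam * ∫ x, (f x) ^ 2 := by
    have h : (∫ x, (a * (f x * f'' x) + ((f x) ^ 2 * g x + f x * g x)))
        = ∫ x, lam * (f x) ^ 2 := by
      congr 1; funext x; linear_combination f x * hEL1 x
    rwa [integral_add (hiff''.const_mul a)
      (show Integrable (fun x => (f x) ^ 2 * g x + f x * g x) from hif2g.add hifg),
      integral_add hif2g hifg,
      integral_const_mul, integral_const_mul] at h
  -- integrate EL2 against g
  have E2 : c * (∫ x, g x * g'' x) + ((1 / 2) * (∫ x, (f x) ^ 2 * g x) + ∫ x, f x * g x)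
      = lam * ∫ x, (g x) ^ 2 := by
    have h : (∫ x, (c * (g x * g'' x) + ((1 / 2) * ((f x) ^ 2 * g x) + f x * g x)))
        = ∫ x, lam * (g x) ^ 2 := by
      congr 1; funext x; linear_combination g x * hEL2 x
    rwa [integral_add (higg''.const_mul c)
      (show Integrable (fun x => (1/2) * ((f x) ^ 2 * g x) + f x * g x) from
        (hif2g.const_mul (1/2)).add hifg),
      integral_add (hif2g.const_mul (1/2)) hifg,
      integral_const_mul, integral_const_mul, integral_const_mul] at h
  have hneg : (∫ x, (f x) ^ 2 * g x) ≤ 0 :=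
    integral_nonpos fun x => mul_nonpos_of_nonneg_of_nonpos (sq_nonneg _) (hgneg x)
  rw [ibpf] at E1; rw [ibpg] at E2
  have hlm : lam * μ = lam * (∫ x, (f x) ^ 2) + lam * ∫ x, (g x) ^ 2 := by
    rw [← hconstraint]; ring
  constructor
  · linarith
  · linarith
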